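/- arXiv:2004.04155 — 7 statements merged into one kernel-verified Lean document; each statement's English description precedes it below -/
import Mathlib

section
/- In a C*-algebra A, triple cube roots are unique: if z, w ∈ A satisfy z z* z = w w* w, then z = w. In particular, every element of A admits at most one cube root with respect to the triple product {a,b,c} = (a b* c + c b* a)/2 (note {z,z,z} = z z* z). -/
open Filter Topology

section Aux

variable {A : Type*} [NonUnitalCStarAlgebra A]

lemma qspec_nonneg' (z : A) : ∀ x ∈ quasispectrum ℝ (star z * z), 0 ≤ x := by
  intro x hx
  rw [Unitization.quasispectrum_eq_spectrum_inr' ℝ ℂ] at hx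
  rw [Unitization.inr_mul, Unitization.inr_star] at hx
  exact spectrum_star_mul_self_nonneg x hx

lemma approx' (z : A) :
    Tendsto (fun ε : ℝ => (z * star z * z) * cfcₙ (fun t : ℝ => t / (t ^ 2 + ε)) (star z * z))
      (𝓝[>] (0:ℝ)) (𝓝 z) := by
  have hb : IsSelfAdjoint (star z * z) := IsSelfAdjoint.star_mul_self z
  have hsp := qspec_nonneg' z
  rw [tendsto_iff_norm_sub_tendsto_zero]
  have key : ∀ ε : ℝ, 0 < ε →
      ‖(z * star z * z) * cfcₙ (fun t : ℝ => t / (t ^ 2 + ε)) (star z * z) - z‖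
        ≤ Real.sqrt (Real.sqrt ε / 2) := by
    intro ε hε
    have hcont : Continuous fun t : ℝ => t / (t ^ 2 + ε) :=
      continuous_id.div (by fun_prop) (fun t => by positivity)
    set g : ℝ → ℝ := fun t => t * (t / (t ^ 2 + ε)) with hgdef
    have hgc : Continuous g := continuous_id.mul hcont
    set N := cfcₙ g (star z * z) with hNdef
    have hNsa : IsSelfAdjoint N := cfcₙ_predicate g (star z * z)
    have hstep : (z * star z * z) * cfcₙ (fun t : ℝ => t / (t ^ 2 + ε)) (star z * z) = z * N := by
      rw [hNdef, hgdef, cfcₙ_mul (fun t : ℝ => t) (fun t : ℝ => t / (t ^ 2 + ε)) (star z * z)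
        (by fun_prop) (by norm_num) hcont.continuousOn (by norm_num), cfcₙ_id' ℝ (star z * z)]
      simp only [mul_assoc]
    rw [hstep]
    have expand : star (z * N - z) * (z * N - z) =
        N * (star z * z) * N - N * (star z * z) - (star z * z) * N + (star z * z) := by
      rw [star_sub, star_mul, hNsa.star_eq]
      noncomm_ring
    have e2 : N * (star z * z) = cfcₙ (fun t => g t * t) (star z * z) := by
      rw [cfcₙ_mul g (fun t : ℝ => t) (star z * z) hgc.continuousOn (by simp [hgdef])
        (by fun_prop) (by norm_num), cfcₙ_id' ℝ (star z * z), hNdef]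
    have e1 : (star z * z) * N = cfcₙ (fun t => t * g t) (star z * z) := by
      rw [cfcₙ_mul (fun t : ℝ => t) g (star z * z) (by fun_prop) (by norm_num)
        hgc.continuousOn (by simp [hgdef]), cfcₙ_id' ℝ (star z * z), hNdef]
    have e3 : N * (star z * z) * N = cfcₙ (fun t => g t * t * g t) (star z * z) := by
      rw [cfcₙ_mul (fun t => g t * t) g (star z * z) (by fun_prop) (by simp [hgdef])
        hgc.continuousOn (by simp [hgdef]), ← e2, hNdef]
    have eF : star (z * N - z) * (z * N - z)
        = cfcₙ (fun t => g t * t * g t - g t * t - t * g t + t) (star z * z) := by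
      rw [expand, cfcₙ_add (fun t => g t * t * g t - g t * t - t * g t) (fun t : ℝ => t)
          (star z * z) (by fun_prop) (by simp [hgdef]) (by fun_prop) (by norm_num),
        cfcₙ_sub (fun t => g t * t * g t - g t * t) (fun t => t * g t) (star z * z)
          (by fun_prop) (by simp [hgdef]) (by fun_prop) (by simp [hgdef]),
        cfcₙ_sub (fun t => g t * t * g t) (fun t => g t * t) (star z * z)
          (by fun_prop) (by simp [hgdef]) (by fun_prop) (by simp [hgdef]),
        ← e1, ← e2, ← e3, cfcₙ_id' ℝ (star z * z)]
    have hbound : ‖cfcₙ (fun t => g t * t * g t - g t * t - t * g t + t) (star z * z)‖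
        ≤ Real.sqrt ε / 2 := by
      apply norm_cfcₙ_le
      intro t ht
      have ht' : 0 ≤ t := hsp t ht
      have hne : (t ^ 2 + ε) ≠ 0 := by positivity
      have hfval : g t * t * g t - g t * t - t * g t + t = t * ε ^ 2 / (t ^ 2 + ε) ^ 2 := by
        simp only [hgdef]
        field_simp
        ring
      rw [hfval, Real.norm_eq_abs, abs_of_nonneg (by positivity)]
      rw [div_le_iff₀ (by positivity)]
      have hs : Real.sqrt ε ^ 2 = ε := Real.sq_sqrt hε.le
      have hs' : 0 < Real.sqrt ε := Real.sqrt_pos.mpr hε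
      set s := Real.sqrt ε with hsdef
      rw [← hs]
      nlinarith [mul_nonneg (mul_nonneg hs'.le (add_nonneg (sq_nonneg t) (sq_nonneg s)))
          (sq_nonneg (t - s)),
        mul_nonneg (mul_nonneg (mul_nonneg ht' ht') ht') (sq_nonneg s)]
    have hsq : ‖z * N - z‖ ^ 2 ≤ Real.sqrt ε / 2 := by
      have := CStarRing.norm_star_mul_self (x := z * N - z)
      calc ‖z * N - z‖ ^ 2 = ‖star (z * N - z) * (z * N - z)‖ := by rw [this]; ring
        _ ≤ Real.sqrt ε / 2 := by rw [eF]; exact hbound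
    have h1 : ‖z * N - z‖ ≤ Real.sqrt (Real.sqrt ε / 2) := by
      rw [show Real.sqrt ε / 2 = Real.sqrt ε / 2 from rfl] at hsq
      nlinarith [Real.sq_sqrt (show (0:ℝ) ≤ Real.sqrt ε / 2 by positivity),
        Real.sqrt_nonneg (Real.sqrt ε / 2), norm_nonneg (z * N - z)]
    exact h1
  have h0 : Tendsto (fun ε : ℝ => Real.sqrt (Real.sqrt ε / 2)) (𝓝[>] (0:ℝ)) (𝓝 0) := by
    have hc : Continuous fun ε : ℝ => Real.sqrt (Real.sqrt ε / 2) := by fun_prop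
    have := (hc.tendsto 0).mono_left (nhdsWithin_le_nhds (s := Set.Ioi (0:ℝ)))
    simpa using this
  exact squeeze_zero' (Filter.Eventually.of_forall fun _ => norm_nonneg _)
    (Filter.eventually_of_mem self_mem_nhdsWithin fun ε hε => key ε hε) h0

lemma cube_root_eq (b : A) (hb : IsSelfAdjoint b) (hb' : ∀ x ∈ quasispectrum ℝ b, 0 ≤ x) :
    cfcₙ (fun t : ℝ => |t| ^ (3⁻¹ : ℝ)) (b * b * b) = b := by
  have hcube : cfcₙ (fun t : ℝ => t * t * t) b = b * b * b := by
    rw [cfcₙ_mul (fun t : ℝ => t * t) (fun t : ℝ => t) b,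
      cfcₙ_mul (fun t : ℝ => t) (fun t : ℝ => t) b, cfcₙ_id' ℝ b]
  rw [← hcube, ← cfcₙ_comp (fun t : ℝ => |t| ^ (3⁻¹ : ℝ)) (fun t : ℝ => t * t * t) b
    (by fun_prop (disch := norm_num)) (by norm_num) (by fun_prop) (by norm_num)]
  rw [show ((fun t : ℝ => |t| ^ (3⁻¹ : ℝ)) ∘ (fun t : ℝ => t * t * t))
      = fun t : ℝ => |t * t * t| ^ (3⁻¹ : ℝ) from rfl]
  rw [cfcₙ_congr (g := id) ?_, cfcₙ_id ℝ b]
  intro t ht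
  have ht' : 0 ≤ t := hb' t ht
  simp only [id]
  rw [abs_of_nonneg (by positivity), show t * t * t = t ^ (3:ℕ) by ring,
    ← Real.rpow_natCast t 3, ← Real.rpow_mul ht']
  norm_num

end Aux

/-- In a C*-algebra, triple cube roots are unique: if `z z* z = w w* w` then `z = w`.
In particular every element admits at most one cube root with respect to the triple
product `{a,b,c} = (a b* c + c b* a)/2`, since `{z,z,z} = z z* z`. -/
theorem triple_cube_injective {A : Type*} [NonUnitalCStarAlgebra A] (z w : A)
    (h : z * star z * z = w * star w * w) : z = w := by
  have h1 : (star z * z) * (star z * z) * (star z * z)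
      = star (z * star z * z) * (z * star z * z) := by
    simp only [star_mul, star_star, mul_assoc]
  have h2 : (star w * w) * (star w * w) * (star w * w)
      = star (w * star w * w) * (w * star w * w) := by
    simp only [star_mul, star_star, mul_assoc]
  have h3 : (star z * z) * (star z * z) * (star z * z)
      = (star w * w) * (star w * w) * (star w * w) := by
    rw [h1, h, ← h2]
  have hbc : star z * z = star w * w := by
    rw [← cube_root_eq (star z * z) (IsSelfAdjoint.star_mul_self z) (qspec_nonneg' z),
      ← cube_root_eq (star w * w) (IsSelfAdjoint.star_mul_self w) (qspec_nonneg' w), h3]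
  have t1 := approx' z
  rw [h, hbc] at t1
  exact tendsto_nhds_unique t1 (approx' w)
end

section
/- Let A be a C*-algebra, let B be a unital C*-algebra, let h ∈ B be invertible, and let r = h ((h* h)^{1/2})^{-1}, which is a unitary in B. Let S : A → B be a continuous linear map which is a triple homomorphism (S({a,b,c}) = {S(a),S(b),S(c)} for all a,b,c ∈ A) and satisfies h* S(x) = S(x*)* h, h S(x*)* = S(x) h*, and h r* S(x) = S(x) r* h for all x ∈ A. Define T : A → B by T(x) = h r* S(x). Then {T(a), T(b), T(c)} = (h h* h) r* S({a,b,c}) for all a, b, c ∈ A. -/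
/-- The canonical triple product `{a,b,c} = (a b* c + c b* a) / 2` of a C*-algebra. -/
noncomputable def tripleProduct {A : Type*} [NonUnitalCStarAlgebra A] (a b c : A) : A :=
  (2 : ℂ)⁻¹ • (a * star b * c + c * star b * a)

/-- Let `h` be invertible in a unital C*-algebra `B`, let `r = h ((h* h)^{1/2})⁻¹` be the
unitary in the polar decomposition of `h`, and let `S : A → B` be a continuous triple
homomorphism intertwined with `h` and `r` as stated.  Then the map `T x = h r* S x`
satisfies `{T a, T b, T c} = (h h* h) r* S {a,b,c}` for all `a, b, c`. -/
theorem tripleProduct_of_orthogonality_preserving_form {A B : Type*}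
    [NonUnitalCStarAlgebra A] [CStarAlgebra B]
    (h : B) (hinv : IsUnit h)
    (r : B) (hr : r = h * Ring.inverse (cfc Real.sqrt (star h * h)))
    (S : A →L[ℂ] B)
    (hS : ∀ a b c : A, S (tripleProduct a b c) = tripleProduct (S a) (S b) (S c))
    (h1 : ∀ x : A, star h * S x = star (S (star x)) * h)
    (h2 : ∀ x : A, h * star (S (star x)) = S x * star h)
    (h3 : ∀ x : A, h * star r * S x = S x * star r * h) :
    ∀ a b c : A,
      tripleProduct (h * star r * S a) (h * star r * S b) (h * star r * S c) =
        h * star h * h * star r * S (tripleProduct a b c) := by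
  set p : B := cfc Real.sqrt (star h * h) with hpdef
  have hsa : IsSelfAdjoint (star h * h) := IsSelfAdjoint.star_mul_self h
  have hpsa : IsSelfAdjoint p := cfc_predicate Real.sqrt (star h * h)
  have hpp : p * p = star h * h := by
    rw [hpdef, ← cfc_mul Real.sqrt Real.sqrt (star h * h)]
    rw [show (fun x => Real.sqrt x * Real.sqrt x) = fun x : ℝ => Real.sqrt x ^ 2 by
      ext x; ring]
    have heq : (spectrum ℝ (star h * h)).EqOn (fun x => Real.sqrt x ^ 2) id := by
      intro x hx
      exact Real.sq_sqrt (spectrum_star_mul_self_nonneg x hx)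
    rw [cfc_congr heq, cfc_id ℝ (star h * h) hsa]
  -- p is a unit
  have hshu : IsUnit (star h * h) := hinv.star.mul hinv
  have hpu : IsUnit p := by
    set w : B := Ring.inverse (star h * h) with hw
    have hw1 : (star h * h) * w = 1 := Ring.mul_inverse_cancel _ hshu
    have hw2 : w * (star h * h) = 1 := Ring.inverse_mul_cancel _ hshu
    have e1 : p * (p * w) = 1 := by rw [← mul_assoc, hpp, hw1]
    have e2 : (w * p) * p = 1 := by rw [mul_assoc, hpp, hw2]
    have e3 : w * p = p * w := left_inv_eq_right_inv e2 e1
    exact ⟨⟨p, p * w, e1, by rw [← e3, mul_assoc, hpp, hw2]⟩, rfl⟩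
  set q : B := Ring.inverse p with hqdef
  have hqp : q * p = 1 := Ring.inverse_mul_cancel p hpu
  have hpq : p * q = 1 := Ring.mul_inverse_cancel p hpu
  have hqsa : star q = q := by
    rw [hqdef, ← Ring.inverse_star, hpsa.star_eq]
  have hrstar : star r = q * star h := by
    rw [hr, star_mul, hqsa]
  have cancel1 : ∀ y : B, q * (p * y) = y := fun y => by rw [← mul_assoc, hqp, one_mul]
  have cancel2 : ∀ y : B, p * (q * y) = y := fun y => by rw [← mul_assoc, hpq, one_mul]
  have hsh : ∀ y : B, star h * (h * y) = p * (p * y) := fun y => by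
    rw [← mul_assoc, ← mul_assoc, hpp]
  -- B'' : r (h* (h (r* y))) = h (h* y)
  have Bkey : ∀ y : B, r * (star h * (h * (star r * y))) = h * (star h * y) := by
    intro y
    rw [hrstar, hr]
    simp only [mul_assoc]
    rw [hsh, cancel1, cancel2]
  -- basic intertwining consequences
  have e1 : ∀ x : A, star (S x) * h = star h * S (star x) := by
    intro x
    have := congrArg star (h1 x)
    simpa [star_mul, star_star] using this
  have e2 : ∀ x : A, S (star x) * star h = h * star (S x) := by
    intro x
    have := h2 (star x)
    rw [star_star] at this
    exact this.symm
  have M1 : ∀ (x : A) (y : B),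
      star (S x) * (h * (star h * y)) = star h * (h * (star (S x) * y)) := by
    intro x y
    calc star (S x) * (h * (star h * y)) = (star (S x) * h) * (star h * y) := by
          simp only [mul_assoc]
      _ = (star h * S (star x)) * (star h * y) := by rw [e1]
      _ = star h * ((S (star x) * star h) * y) := by simp only [mul_assoc]
      _ = star h * ((h * star (S x)) * y) := by rw [e2]
      _ = star h * (h * (star (S x) * y)) := by simp only [mul_assoc]
  have M2 : ∀ (x : A) (y : B),
      S x * (star h * (h * y)) = h * (star h * (S x * y)) := by
    intro x y
    have e3 : S x * star h = h * star (S (star x)) := (h2 x).symm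
    have e4 : star (S (star x)) * h = star h * S x := by
      have := e1 (star x); rwa [star_star] at this
    calc S x * (star h * (h * y)) = (S x * star h) * (h * y) := by
          simp only [mul_assoc]
      _ = (h * star (S (star x))) * (h * y) := by rw [e3]
      _ = h * ((star (S (star x)) * h) * y) := by simp only [mul_assoc]
      _ = h * ((star h * S x) * y) := by rw [e4]
      _ = h * (star h * (S x * y)) := by simp only [mul_assoc]
  have Ckey : ∀ y : B, star r * (h * (star h * y)) = star h * (h * (star r * y)) := by
    intro y
    rw [hrstar]
    simp only [mul_assoc]
    rw [hsh, cancel1, hsh, cancel2]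
  have E : ∀ x y z : A,
      (h * star r * S x) * star (h * star r * S y) * (h * star r * S z) =
        h * (star h * (h * (star r * (S x * (star (S y) * S z))))) := by
    intro x y z
    have hstar : star (h * star r * S y) = star (S y) * (r * star h) := by
      simp [star_mul, star_star, mul_assoc]
    calc (h * star r * S x) * star (h * star r * S y) * (h * star r * S z)
        = h * (star r * (S x * (star (S y) * (r * (star h * (h * (star r * S z))))))) := by
          rw [hstar]; simp only [mul_assoc]
      _ = h * (star r * (S x * (star (S y) * (h * (star h * S z))))) := by rw [Bkey]
      _ = h * (star r * (S x * (star h * (h * (star (S y) * S z))))) := by rw [M1]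
      _ = h * (star r * (h * (star h * (S x * (star (S y) * S z))))) := by rw [M2]
      _ = h * (star h * (h * (star r * (S x * (star (S y) * S z))))) := by rw [Ckey]
  intro a b c
  rw [hS a b c]
  simp only [tripleProduct]
  rw [E a b c, E c b a]
  simp only [mul_smul_comm, smul_add, mul_add, mul_assoc]
end

section
/- Let A be a C*-algebra, let B be a unital C*-algebra, let h ∈ B be invertible, and let r = h ((h* h)^{1/2})^{-1}, which is a unitary in B. Let S : A → B be a continuous surjective linear map which is a triple homomorphism (S({a,b,c}) = {S(a),S(b),S(c)} for all a,b,c ∈ A) and satisfies h* S(x) = S(x*)* h, h S(x*)* = S(x) h*, and h r* S(x) = S(x) r* h for all x ∈ A. Then the map T : A → B defined by T(x) = h r* S(x) = S(x) r* h is a surjective bounded linear operator which is orthogonality preserving. -/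
/-- Two elements `a, b` of a C*-algebra are orthogonal if `a b* = 0` and `b* a = 0`. -/
def IsOrthogonal {A : Type*} [NonUnitalCStarAlgebra A] (a b : A) : Prop :=
  a * star b = 0 ∧ star b * a = 0

/-- A surjective triple homomorphism preserves orthogonality. -/
lemma orth_key {A B : Type*} [NonUnitalCStarAlgebra A] [CStarAlgebra B]
    (S : A →L[ℂ] B) (hSsurj : Function.Surjective S)
    (hS : ∀ a b c : A, S (tripleProduct a b c) = tripleProduct (S a) (S b) (S c))
    {a b : A} (hab : IsOrthogonal a b) : IsOrthogonal (S a) (S b) := by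
  obtain ⟨hab1, hab2⟩ := hab
  set u : B := S a * star (S b) with hu
  set v : B := star (S b) * S a with hv
  have htrip0 : ∀ c : A, tripleProduct a b c = 0 := by
    intro c
    unfold tripleProduct
    rw [hab1, mul_assoc c, hab2]
    simp
  have hzero : ∀ c : A, S a * star (S b) * S c + S c * star (S b) * S a = 0 := by
    intro c
    have h := hS a b c
    rw [htrip0 c, map_zero] at h
    unfold tripleProduct at h
    have h' := h.symm
    rw [smul_eq_zero] at h'
    rcases h' with h' | h'
    · norm_num at h'
    · exact h'
  have key : ∀ y : B, u * y + y * v = 0 := by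
    intro y
    obtain ⟨c, rfl⟩ := hSsurj y
    have h := hzero c
    rwa [mul_assoc (S c)] at h
  have hvu : v = -u := by
    have h := key 1
    rw [mul_one, one_mul] at h
    exact eq_neg_of_add_eq_zero_right h
  have central : ∀ y : B, u * y = y * u := by
    intro y
    have h := key y
    rw [hvu, mul_neg, ← sub_eq_add_neg, sub_eq_zero] at h
    exact h
  have huSa : u * S a = 0 := by
    have h := hS a b a
    rw [htrip0 a, map_zero] at h
    unfold tripleProduct at h
    have h' := h.symm
    rw [smul_eq_zero] at h'
    rcases h' with h' | h'
    · norm_num at h'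
    · have : (2 : ℂ) • (S a * star (S b) * S a) = 0 := by
        rw [two_smul]; exact h'
      rw [smul_eq_zero] at this
      rcases this with h'' | h''
      · norm_num at h''
      · exact h''
  have hu2 : u * u = 0 := by
    calc u * u = (u * S a) * star (S b) := by
          simp only [hu, mul_assoc]
    _ = 0 := by rw [huSa, zero_mul]
  have hx2 : (star u * u) * (star u * u) = 0 := by
    calc (star u * u) * (star u * u)
        = star u * ((u * star u) * u) := by simp only [mul_assoc]
      _ = star u * ((star u * u) * u) := by rw [central (star u)]
      _ = (star u * star u) * (u * u) := by simp only [mul_assoc]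
      _ = 0 := by rw [hu2, mul_zero]
  have hxsa : star (star u * u) = star u * u := by simp [star_mul, mul_assoc]
  have hx0 : star u * u = 0 := by
    have := (CStarRing.star_mul_self_eq_zero_iff (star u * u)).mp (by rw [hxsa]; exact hx2)
    exact this
  have hu0 : u = 0 := (CStarRing.star_mul_self_eq_zero_iff u).mp hx0
  refine ⟨hu0, ?_⟩
  show v = 0
  rw [hvu, hu0, neg_zero]

/-- Let `h` be invertible in a unital C*-algebra `B`, let `r = h ((h* h)^{1/2})⁻¹` be the
unitary in the polar decomposition of `h`, and let `S : A → B` be a continuous surjective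
triple homomorphism intertwined with `h` and `r` as stated.  Then `T x = h r* S x = S x r* h`
is a surjective bounded linear operator which is orthogonality preserving. -/
theorem surjective_orthogonality_preserving_of_form {A B : Type*}
    [NonUnitalCStarAlgebra A] [CStarAlgebra B]
    (h : B) (hinv : IsUnit h)
    (r : B) (hr : r = h * Ring.inverse (cfc Real.sqrt (star h * h)))
    (S : A →L[ℂ] B) (hSsurj : Function.Surjective S)
    (hS : ∀ a b c : A, S (tripleProduct a b c) = tripleProduct (S a) (S b) (S c))
    (h1 : ∀ x : A, star h * S x = star (S (star x)) * h)
    (h2 : ∀ x : A, h * star (S (star x)) = S x * star h)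
    (h3 : ∀ x : A, h * star r * S x = S x * star r * h) :
    Function.Surjective (fun x : A => h * star r * S x) ∧
      ∀ a b : A, IsOrthogonal a b →
        IsOrthogonal (h * star r * S a) (h * star r * S b) := by
  set p : B := cfc Real.sqrt (star h * h) with hp
  have hph : IsUnit (star h * h) := (hinv.star).mul hinv
  have hpu : IsUnit p := by
    rw [hp]
    refine (isUnit_cfc_iff Real.sqrt (star h * h)).mpr ?_
    intro x hx
    have hx0 : 0 ≤ x := spectrum_star_mul_self_nonneg x hx
    have hxne : x ≠ 0 := by
      intro h0
      exact ((spectrum.zero_notMem_iff ℝ).mpr hph) (h0 ▸ hx)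
    exact ne_of_gt (Real.sqrt_pos.mpr (lt_of_le_of_ne hx0 (Ne.symm hxne)))
  have hpsa : IsSelfAdjoint p := cfc_predicate Real.sqrt (star h * h)
  have hstarr : star r = Ring.inverse p * star h := by
    rw [hr, star_mul, ← Ring.inverse_star, hpsa.star_eq]
  have hTu : IsUnit (h * star r) := by
    rw [hstarr, ← mul_assoc]
    exact (hinv.mul (isUnit_ringInverse.mpr hpu)).mul hinv.star
  constructor
  · intro y
    obtain ⟨x, hx⟩ := hSsurj ((↑hTu.unit⁻¹ : B) * y)
    refine ⟨x, ?_⟩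
    show h * star r * S x = y
    rw [hx]
    exact hTu.unit.mul_inv_cancel_left y
  · intro a b hab
    obtain ⟨hu, hv⟩ := orth_key S hSsurj hS hab
    constructor
    · calc h * star r * S a * star (h * star r * S b)
          = (h * star r) * ((S a * star (S b)) * (star (star r) * star h)) := by
            simp only [star_mul, star_star, mul_assoc]
        _ = 0 := by rw [hu, zero_mul, mul_zero]
    · rw [h3 a, h3 b]
      calc star (S b * star r * h) * (S a * star r * h)
          = (star h * star (star r)) * ((star (S b) * S a) * (star r * h)) := by
            simp only [star_mul, star_star, mul_assoc]
        _ = 0 := by rw [hv, zero_mul, mul_zero]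
end

section
/- Let Φ : A → B be a continuous Jordan *-isomorphism between C*-algebras, i.e., a continuous linear bijection with Φ(a ∘ b) = Φ(a) ∘ Φ(b) and Φ(a*) = Φ(a)* for all a, b ∈ A. Then Φ maps the center of A onto the center of B, and for every a in the center of A and every b ∈ A one has Φ(a b) = Φ(a) Φ(b). -/
open Filter

lemma unital_central_commutator_eq_zero {C : Type*} [CStarAlgebra C]
    (s v : C) (hc : ∀ x : C, (s * v - v * s) * x = x * (s * v - v * s)) :
    s * v = v * s := by
  set c : C := s * v - v * s with hcdef
  have hcomm : ∀ x : C, c * x = x * c := hc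
  set D : C → C := fun x => s * x - x * s with hD
  -- claim 1 : D (v^(m+1)) = (m+1) • (c * v^m)
  have claim1 : ∀ m : ℕ, D (v ^ (m + 1)) = (m + 1) • (c * v ^ m) := by
    intro m
    induction m with
    | zero => simp [hD, hcdef]
    | succ n ih =>
      have hv : v ^ (n + 1 + 1) = v * v ^ (n + 1) := (pow_succ' v (n + 1))
      rw [hv]
      have expand : D (v * v ^ (n + 1)) = c * v ^ (n + 1) + v * D (v ^ (n + 1)) := by
        simp only [hD, hcdef]; noncomm_ring
      rw [expand, ih, mul_smul_comm, ← mul_assoc, ← hcomm v, mul_assoc, ← pow_succ' v n]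
      exact (add_comm _ _).trans (succ_nsmul _ _).symm
  have hcm : ∀ (m : ℕ) (x : C), c ^ m * x = x * c ^ m := by
    intro m
    induction m with
    | zero => simp
    | succ n ih => intro x; rw [pow_succ, mul_assoc, hcomm x, ← mul_assoc, ih, mul_assoc]
  have hDc : ∀ (k : ℕ) (x : C), D (c ^ k * x) = c ^ k * D x := by
    intro k x
    have hsk : s * c ^ k = c ^ k * s := (hcm k s).symm
    simp only [hD]
    calc s * (c ^ k * x) - (c ^ k * x) * s
        = (s * c ^ k) * x - c ^ k * (x * s) := by rw [mul_assoc, mul_assoc]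
      _ = c ^ k * (s * x) - c ^ k * (x * s) := by rw [hsk, mul_assoc]
      _ = c ^ k * (s * x - x * s) := (mul_sub _ _ _).symm
  have hsmulD : ∀ (m : ℕ) (x : C), D (m • x) = m • D x := by
    intro m x; simp only [hD, smul_sub, mul_smul_comm, smul_mul_assoc]
  have claim2 : ∀ n k : ℕ, k ≤ n → D^[k] (v ^ n) = n.descFactorial k • (c ^ k * v ^ (n - k)) := by
    intro n k
    induction k with
    | zero => intro _; simp
    | succ j ih =>
      intro hjn
      rw [Function.iterate_succ_apply', ih (le_of_lt hjn), hsmulD, hDc]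
      have hnj : n - j = (n - (j + 1)) + 1 := by omega
      rw [hnj, claim1, Nat.descFactorial_succ, mul_smul_comm, smul_smul, ← mul_assoc, ← pow_succ]
      have h2 : n - (j + 1) + 1 = n - j := by omega
      rw [h2, Nat.mul_comm]
  have claim3 : ∀ n : ℕ, D^[n] (v ^ n) = n.factorial • c ^ n := by
    intro n
    rw [claim2 n n le_rfl, Nat.sub_self, pow_zero, mul_one, Nat.descFactorial_self]
  have hDnorm : ∀ x : C, ‖D x‖ ≤ 2 * ‖s‖ * ‖x‖ := by
    intro x
    calc ‖s * x - x * s‖ ≤ ‖s * x‖ + ‖x * s‖ := norm_sub_le _ _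
      _ ≤ ‖s‖ * ‖x‖ + ‖x‖ * ‖s‖ := add_le_add (norm_mul_le _ _) (norm_mul_le _ _)
      _ = 2 * ‖s‖ * ‖x‖ := by ring
  have hDiter : ∀ (k : ℕ) (x : C), ‖D^[k] x‖ ≤ (2 * ‖s‖) ^ k * ‖x‖ := by
    intro k
    induction k with
    | zero => intro x; simp
    | succ j ih =>
      intro x
      rw [Function.iterate_succ_apply']
      calc ‖D (D^[j] x)‖ ≤ 2 * ‖s‖ * ‖D^[j] x‖ := hDnorm _
        _ ≤ 2 * ‖s‖ * ((2 * ‖s‖) ^ j * ‖x‖) := by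
            apply mul_le_mul_of_nonneg_left (ih x) (by positivity)
        _ = (2 * ‖s‖) ^ (j + 1) * ‖x‖ := by ring
  -- key norm estimate
  have key : ∀ n : ℕ, 1 ≤ n → (n.factorial : ℝ) * ‖c ^ n‖ ≤ (2 * ‖s‖ * ‖v‖) ^ n := by
    intro n hn
    have h1 : ‖(n.factorial • c ^ n : C)‖ = (n.factorial : ℝ) * ‖c ^ n‖ := by
      rw [← Nat.cast_smul_eq_nsmul ℝ, norm_smul, Real.norm_natCast]
    calc (n.factorial : ℝ) * ‖c ^ n‖ = ‖D^[n] (v ^ n)‖ := by rw [claim3, h1]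
      _ ≤ (2 * ‖s‖) ^ n * ‖v ^ n‖ := hDiter n _
      _ ≤ (2 * ‖s‖) ^ n * ‖v‖ ^ n := by
          apply mul_le_mul_of_nonneg_left (norm_pow_le' v hn) (by positivity)
      _ = (2 * ‖s‖ * ‖v‖) ^ n := (mul_pow _ _ _).symm
  -- norm of powers of the normal central element c
  have hsq : ∀ x : C, x * star x = star x * x → ‖x * x‖ = ‖x‖ * ‖x‖ := by
    intro x hx
    have e1 : star (x * x) * (x * x) = (star x * x) * (star x * x) := by
      rw [star_mul]
      calc star x * star x * (x * x) = star x * (star x * x * x) := by noncomm_ring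
        _ = star x * (x * star x * x) := by rw [← hx]
        _ = star x * x * (star x * x) := by noncomm_ring
    have e2 : ‖x * x‖ * ‖x * x‖ = (‖x‖ * ‖x‖) * (‖x‖ * ‖x‖) := by
      rw [← CStarRing.norm_star_mul_self, e1]
      have e3 : (star x * x) * (star x * x) = star (star x * x) * (star x * x) := by
        rw [star_mul, star_star]
      rw [e3, CStarRing.norm_star_mul_self, CStarRing.norm_star_mul_self]
    have h0 : (0:ℝ) ≤ ‖x * x‖ := norm_nonneg _
    have h0' : (0:ℝ) ≤ ‖x‖ * ‖x‖ := by positivity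
    nlinarith [sq_nonneg (‖x * x‖ - ‖x‖ * ‖x‖), sq_nonneg (‖x * x‖ + ‖x‖ * ‖x‖)]
  have hpow : ∀ k : ℕ, ‖c ^ (2 ^ k)‖ = ‖c‖ ^ (2 ^ k) := by
    intro k
    induction k with
    | zero => simp
    | succ j ih =>
      have h1 : c ^ (2 ^ (j + 1)) = c ^ (2 ^ j) * c ^ (2 ^ j) := by
        rw [← pow_add]; congr 1; omega
      have hnormal : c ^ (2 ^ j) * star (c ^ (2 ^ j)) = star (c ^ (2 ^ j)) * c ^ (2 ^ j) :=
        hcm _ _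
      rw [h1, hsq _ hnormal, ih, ← pow_add]
      congr 1; omega
  -- conclude c = 0
  have hczero : c = 0 := by
    by_contra hne
    have hcpos : 0 < ‖c‖ := norm_pos_iff.mpr hne
    set M : ℝ := 2 * ‖s‖ * ‖v‖ with hM
    set r : ℝ := M / ‖c‖ with hr
    have hfac : ∀ k : ℕ, ((2 ^ k).factorial : ℝ) ≤ r ^ (2 ^ k) := by
      intro k
      have h1 := key (2 ^ k) (Nat.one_le_two_pow)
      rw [hpow k] at h1
      have h2 : (0:ℝ) < ‖c‖ ^ (2 ^ k) := by positivity
      rw [hr, div_pow, le_div_iff₀ h2]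
      calc ((2 ^ k).factorial : ℝ) * ‖c‖ ^ 2 ^ k ≤ M ^ (2 ^ k) := h1
        _ = M ^ 2 ^ k := rfl
    have htend : Tendsto (fun n : ℕ => r ^ n / (n.factorial : ℝ)) atTop (nhds 0) :=
      FloorSemiring.tendsto_pow_div_factorial_atTop r
    have htwo : Tendsto (fun k : ℕ => 2 ^ k) atTop atTop :=
      tendsto_pow_atTop_atTop_of_one_lt one_lt_two
    have hcomp := htend.comp htwo
    have hlt : ∀ᶠ k in atTop, r ^ (2 ^ k) / ((2 ^ k).factorial : ℝ) < 1 := by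
      have := hcomp.eventually (eventually_lt_nhds (by norm_num : (0:ℝ) < 1))
      exact this
    obtain ⟨k, hk⟩ := hlt.exists
    have hfk : (0:ℝ) < ((2 ^ k).factorial : ℝ) := by positivity
    have := hfac k
    rw [div_lt_one hfk] at hk
    linarith
  rw [hcdef] at hczero
  exact sub_eq_zero.mp hczero
/-- Non-unital version via unitization. -/
lemma central_commutator_eq_zero {B : Type*} [NonUnitalCStarAlgebra B]
    (s v : B) (hc : ∀ x : B, (s * v - v * s) * x = x * (s * v - v * s)) :
    s * v = v * s := by
  have key : (s : Unitization ℂ B) * v = (v : Unitization ℂ B) * s := by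
    apply unital_central_commutator_eq_zero
    intro x
    have hsub : ((s * v - v * s : B) : Unitization ℂ B) =
        (s : Unitization ℂ B) * v - (v : Unitization ℂ B) * s := by
      rw [Unitization.inr_sub, Unitization.inr_mul, Unitization.inr_mul]
    rw [← hsub]
    induction x using Unitization.ind with
    | inl_add_inr r b =>
      rw [mul_add, add_mul]
      congr 1
      · rw [Unitization.inr_mul_inl, Unitization.inl_mul_inr]
      · rw [← Unitization.inr_mul, ← Unitization.inr_mul, hc b]
  have : ((s * v : B) : Unitization ℂ B) = ((v * s : B) : Unitization ℂ B) := by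
    rw [Unitization.inr_mul, Unitization.inr_mul, key]
  exact Unitization.inr_injective this

/-- If `z` is central, the Jordan triple associativity holds (any non-unital ring). -/
lemma jassoc_of_central {R : Type*} [NonUnitalRing R] (z x y : R)
    (hz : ∀ t : R, z * t = t * z) :
    z * (x * y + y * x) + (x * y + y * x) * z = (z * x + x * z) * y + y * (z * x + x * z) := by
  have h1 : x * z = z * x := (hz x).symm
  have h2 : (x * y + y * x) * z = z * (x * y + y * x) := (hz _).symm
  rw [h1, h2]
  have h3 : y * (z * x + z * x) = z * (y * x) + z * (y * x) := by
    rw [mul_add, ← mul_assoc, ← hz y, mul_assoc]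
  rw [h3]
  have h4 : (z * x + z * x) * y = z * (x * y) + z * (x * y) := by
    rw [add_mul, mul_assoc]
  rw [h4]
  simp only [mul_add]
  abel

/-- Conversely, Jordan triple associativity for all pairs forces centrality (C*). -/
lemma central_of_jassoc {B : Type*} [NonUnitalCStarAlgebra B] (w : B)
    (h : ∀ u v : B,
      w * (u * v + v * u) + (u * v + v * u) * w = (w * u + u * w) * v + v * (w * u + u * w)) :
    ∀ v : B, w * v = v * w := by
  intro v
  apply central_commutator_eq_zero
  intro u
  have key : (w * v - v * w) * u - u * (w * v - v * w) =
      (w * (u * v + v * u) + (u * v + v * u) * w) -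
        ((w * u + u * w) * v + v * (w * u + u * w)) := by noncomm_ring
  rw [h u v, sub_self] at key
  exact sub_eq_zero.mp key

/-- A continuous Jordan *-isomorphism `Φ` between C*-algebras maps the center of `A` onto
the center of `B`, and acts multiplicatively on central elements:
`Φ (a b) = Φ a * Φ b` whenever `a` is central. -/
theorem jordan_star_isomorphism_center {A B : Type*}
    [NonUnitalCStarAlgebra A] [NonUnitalCStarAlgebra B] (Φ : A →L[ℂ] B)
    (hbij : Function.Bijective Φ)
    (hjordan : ∀ a b : A,
      Φ ((2 : ℂ)⁻¹ • (a * b + b * a)) = (2 : ℂ)⁻¹ • (Φ a * Φ b + Φ b * Φ a))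
    (hstar : ∀ a : A, Φ (star a) = star (Φ a)) :
    Φ '' {z : A | ∀ x : A, z * x = x * z} = {w : B | ∀ y : B, w * y = y * w} ∧
      ∀ a : A, (∀ x : A, a * x = x * a) → ∀ b : A, Φ (a * b) = Φ a * Φ b := by
  -- Jordan multiplicativity without the 1/2 factor
  have hJ : ∀ a b : A, Φ (a * b + b * a) = Φ a * Φ b + Φ b * Φ a := by
    intro a b
    have h := hjordan a b
    rw [map_smul] at h
    have h2 := congrArg (fun t => (2 : ℂ) • t) h
    simpa [smul_smul] using h2
  -- forward direction: central elements map to central elements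
  have hforward : ∀ z : A, (∀ x : A, z * x = x * z) → ∀ y : B, Φ z * y = y * Φ z := by
    intro z hz
    apply central_of_jassoc
    intro u v
    obtain ⟨x, rfl⟩ := hbij.2 u
    obtain ⟨y, rfl⟩ := hbij.2 v
    rw [← hJ x y, ← hJ z (x * y + y * x), ← hJ z x, ← hJ (z * x + x * z) y]
    exact congrArg Φ (jassoc_of_central z x y hz)
  -- reverse direction
  have hreverse : ∀ z : A, (∀ y : B, Φ z * y = y * Φ z) → ∀ x : A, z * x = x * z := by
    intro z hw
    apply central_of_jassoc
    intro x y
    apply hbij.1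
    rw [hJ z (x * y + y * x), hJ x y, hJ (z * x + x * z) y, hJ z x]
    exact jassoc_of_central (Φ z) (Φ x) (Φ y) hw
  constructor
  · ext w
    simp only [Set.mem_image, Set.mem_setOf_eq]
    constructor
    · rintro ⟨z, hz, rfl⟩
      exact hforward z hz
    · intro hw
      obtain ⟨z, rfl⟩ := hbij.2 w
      exact ⟨z, hreverse z hw, rfl⟩
  · intro a ha b
    have h1 : Φ (a * b + b * a) = Φ a * Φ b + Φ b * Φ a := hJ a b
    rw [← ha b] at h1
    rw [hforward a ha (Φ b)] at h1
    rw [map_add] at h1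
    -- now h1 : Φ (a*b) + Φ (a*b) = Φ b * Φ a + Φ b * Φ a ... need halving
    have h2 := congrArg (fun t => (2 : ℂ)⁻¹ • t) h1
    simp only [smul_add] at h2
    rw [← two_smul ℂ (Φ (a * b)), ← two_smul ℂ (Φ b * Φ a)] at h1
    have h3 := congrArg (fun t => (2 : ℂ)⁻¹ • t) h1
    simp only [smul_smul] at h3
    norm_num at h3
    rw [h3, hforward a ha (Φ b)]
end

section
/- Let A be a C*-algebra and a ∈ A. For each t ∈ ℝ, the operator exp(i t L(a,a)) on A, where L(a,a) : A → A is the bounded linear map L(a,a)(x) = (a a* x + x a* a)/2, is a bijective linear isometry of A; thus {exp(i t L(a,a)) : t ∈ ℝ} is a one-parameter group of surjective linear isometries on A. -/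
open NormedSpace ContinuousLinearMap Complex

section Aux

variable {U : Type*} [CStarAlgebra U]

/-- Left multiplication as an algebra hom into continuous linear maps. -/
noncomputable def mulLeftAlgHom (U : Type*) [CStarAlgebra U] : U →ₐ[ℂ] (U →L[ℂ] U) where
  toFun := ContinuousLinearMap.mul ℂ U
  map_one' := by ext x; simp
  map_mul' y z := by ext x; simp [mul_assoc]
  map_zero' := by ext x; simp
  map_add' y z := by ext x; simp [add_mul]
  commutes' r := by ext x; simp [Algebra.algebraMap_eq_smul_one, smul_mul_assoc]

/-- Right multiplication as an algebra hom from the opposite algebra. -/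
noncomputable def mulRightAlgHom (U : Type*) [CStarAlgebra U] : Uᵐᵒᵖ →ₐ[ℂ] (U →L[ℂ] U) where
  toFun y := (ContinuousLinearMap.mul ℂ U).flip y.unop
  map_one' := by ext x; simp
  map_mul' y z := by ext x; simp [mul_assoc]
  map_zero' := by ext x; simp
  map_add' y z := by ext x; simp [mul_add]
  commutes' r := by ext x; simp [Algebra.algebraMap_eq_smul_one, mul_smul_comm]

lemma continuous_mulLeftAlgHom : Continuous (mulLeftAlgHom U) :=
  (ContinuousLinearMap.mul ℂ U).continuous

lemma continuous_mulRightAlgHom : Continuous (mulRightAlgHom U) :=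
  (ContinuousLinearMap.mul ℂ U).flip.continuous.comp MulOpposite.continuous_unop

lemma exp_mulLeft (b : U) :
    exp (ContinuousLinearMap.mul ℂ U b) = ContinuousLinearMap.mul ℂ U (exp b) := by
  let +nondep : NormedAlgebra ℚ U := .restrictScalars ℚ ℂ U
  let +nondep : NormedAlgebra ℚ (U →L[ℂ] U) := .restrictScalars ℚ ℂ (U →L[ℂ] U)
  simpa [mulLeftAlgHom] using (map_exp (mulLeftAlgHom U) continuous_mulLeftAlgHom b).symm

lemma exp_mulRight (c : U) :
    exp ((ContinuousLinearMap.mul ℂ U).flip c)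
      = (ContinuousLinearMap.mul ℂ U).flip (exp c) := by
  let +nondep : NormedAlgebra ℚ U := .restrictScalars ℚ ℂ U
  let +nondep : NormedAlgebra ℚ (U →L[ℂ] U) := .restrictScalars ℚ ℂ (U →L[ℂ] U)
  have := (map_exp (mulRightAlgHom U) continuous_mulRightAlgHom (MulOpposite.op c)).symm
  simpa [mulRightAlgHom, exp_op] using this

end Aux

set_option maxHeartbeats 2000000 in
set_option synthInstance.maxHeartbeats 400000 in
/-- For every element `a` of a C*-algebra `A` and every real `t`, the operator
`exp (i t L(a,a))`, where `L(a,a) x = (a a* x + x a* a)/2`, is a bijective linear isometry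
of `A`; thus `{exp (i t L(a,a)) : t ∈ ℝ}` is a one-parameter group of surjective linear
isometries on `A`. -/
theorem exp_smul_L_isometry {A : Type*} [NonUnitalCStarAlgebra A] (a : A)
    (L : A →L[ℂ] A)
    (hL : ∀ x : A, L x = (2 : ℂ)⁻¹ • (a * star a * x + x * (star a * a))) :
    ∀ t : ℝ,
      Function.Bijective
          ⇑(NormedSpace.exp ((Complex.I * t) • L) : A →L[ℂ] A) ∧
        Isometry ⇑(NormedSpace.exp ((Complex.I * t) • L) : A →L[ℂ] A) := by
  intro t
  set T : A →L[ℂ] A := (Complex.I * t) • L with hT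
  -- the unitization
  set U := Unitization ℂ A
  haveI : T2Space U := inferInstanceAs (T2Space (Unitization ℂ A))
  let +nondep : NormedAlgebra ℚ U := .restrictScalars ℚ ℂ U
  let +nondep : NormedAlgebra ℚ (U →L[ℂ] U) := .restrictScalars ℚ ℂ (U →L[ℂ] U)
  let +nondep : NormedAlgebra ℚ (A →L[ℂ] A) := .restrictScalars ℚ ℂ (A →L[ℂ] A)
  -- the inclusion as a continuous linear map
  let ι : A →L[ℂ] U :=
    { toFun := Unitization.inr
      map_add' := fun x y => by simp
      map_smul' := fun r x => by simp
      cont := Unitization.continuous_inr }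
  have hι : ∀ x : A, ι x = (x : U) := fun _ => rfl
  set b : U := ((a * star a : A) : U) with hb
  set c : U := ((star a * a : A) : U) with hc
  set β : U := (Complex.I * t * (2:ℂ)⁻¹) • b with hβ
  set γ : U := (Complex.I * t * (2:ℂ)⁻¹) • c with hγ
  set P : U →L[ℂ] U := ContinuousLinearMap.mul ℂ U β with hP
  set Q : U →L[ℂ] U := (ContinuousLinearMap.mul ℂ U).flip γ with hQ
  set M : U →L[ℂ] U := P + Q with hM
  -- intertwining relation
  have key : ∀ x : A, ι (T x) = M (ι x) := by
    intro x
    simp only [hT, hM, hP, hQ, ContinuousLinearMap.smul_apply, ContinuousLinearMap.add_apply,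
      ContinuousLinearMap.mul_apply', ContinuousLinearMap.flip_apply, hL, hι, hβ, hγ]
    push_cast [Unitization.inr_smul, Unitization.inr_add, Unitization.inr_mul]
    rw [smul_mul_assoc, mul_smul_comm, ← smul_add, smul_smul]
    ring_nf
    simp only [hb, hc, Unitization.inr_mul, Unitization.inr_star]
  have keyn : ∀ (n : ℕ) (x : A), ι ((T ^ n) x) = (M ^ n) (ι x) := by
    intro n
    induction n with
    | zero => intro x; simp
    | succ n ih =>
      intro x
      rw [pow_succ, pow_succ]
      show ι ((T ^ n) (T x)) = (M ^ n) (M (ι x))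
      rw [ih, key]
  have hexp : ∀ x : A, ι (exp T x) = exp M (ι x) := by
    intro x
    simp only [exp_eq_tsum (𝕂 := ℂ)]
    have h1 : Summable fun n : ℕ => (((n.factorial : ℂ))⁻¹ • T ^ n) x :=
      (expSeries_summable' (𝕂 := ℂ) T).map (ContinuousLinearMap.apply ℂ A x)
        (ContinuousLinearMap.apply ℂ A x).continuous
    calc ι ((∑' n : ℕ, ((n.factorial : ℂ))⁻¹ • T ^ n) x)
        = ι (∑' n : ℕ, (((n.factorial : ℂ))⁻¹ • T ^ n) x) := by
          congr 1
          exact (ContinuousLinearMap.apply ℂ A x).map_tsum (expSeries_summable' (𝕂 := ℂ) T)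
      _ = ∑' n : ℕ, ι ((((n.factorial : ℂ))⁻¹ • T ^ n) x) := ι.map_tsum h1
      _ = ∑' n : ℕ, (((n.factorial : ℂ))⁻¹ • M ^ n) (ι x) := by
          congr 1; funext n
          simp only [ContinuousLinearMap.smul_apply, map_smul, keyn]
      _ = (∑' n : ℕ, ((n.factorial : ℂ))⁻¹ • M ^ n) (ι x) := by
          exact ((ContinuousLinearMap.apply ℂ U (ι x)).map_tsum
            (expSeries_summable' (𝕂 := ℂ) M)).symm
  -- exp M is conjugate-free product of left/right multiplications by unitaries
  have hPQ : Commute P Q := ContinuousLinearMap.ext fun x => (mul_assoc β x γ).symm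
  have hexpM : exp M = (ContinuousLinearMap.mul ℂ U (exp β)).comp
      ((ContinuousLinearMap.mul ℂ U).flip (exp γ)) := by
    rw [hM, exp_add_of_commute hPQ, hP, hQ, exp_mulLeft, exp_mulRight]
    rfl
  -- the exponentials are unitary
  have hbsa : star b = b := by rw [hb, ← Unitization.inr_star, star_mul, star_star]
  have hcsa : star c = c := by rw [hc, ← Unitization.inr_star, star_mul, star_star]
  have hstar : star (Complex.I * t * (2:ℂ)⁻¹) = -(Complex.I * t * (2:ℂ)⁻¹) := by
    simp [Complex.ext_iff]
  have hβskew : β ∈ skewAdjoint U := by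
    rw [skewAdjoint.mem_iff, hβ, star_smul, hbsa, hstar, neg_smul]
  have hγskew : γ ∈ skewAdjoint U := by
    rw [skewAdjoint.mem_iff, hγ, star_smul, hcsa, hstar, neg_smul]
  have hβu : exp β ∈ unitary U := exp_mem_unitary_of_mem_skewAdjoint hβskew
  have hγu : exp γ ∈ unitary U := exp_mem_unitary_of_mem_skewAdjoint hγskew
  -- isometry
  have hiso : Isometry ⇑(exp T : A →L[ℂ] A) := by
    refine AddMonoidHomClass.isometry_of_norm _ fun x => ?_
    calc ‖exp T x‖ = ‖ι (exp T x)‖ := (Unitization.norm_inr _).symm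
      _ = ‖exp M (ι x)‖ := by rw [hexp]
      _ = ‖exp β * (ι x * exp γ)‖ := by rw [hexpM]; rfl
      _ = ‖ι x * exp γ‖ := CStarRing.norm_mem_unitary_mul _ hβu
      _ = ‖ι x‖ := CStarRing.norm_mul_mem_unitary _ hγu
      _ = ‖x‖ := Unitization.norm_inr _
  refine ⟨⟨hiso.injective, fun y => ⟨exp (-T) y, ?_⟩⟩, hiso⟩
  have : exp T * exp (-T) = 1 := by
    rw [← exp_add_of_commute (Commute.refl T).neg_right, add_neg_cancel, NormedSpace.exp_zero]
  calc exp T (exp (-T) y) = (exp T * exp (-T)) y := rfl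
    _ = y := by rw [this]; rfl
end

section
/- Let e be a partial isometry (e e* e = e) in a C*-algebra A. Then for every t ∈ ℝ and every x ∈ A, exp(i t L(e,e))(x) = e^{it} · (e e* x e* e) + e^{it/2} · (e e* x + x e* e − 2 e e* x e* e) + (x − e e* x − x e* e + e e* x e* e), i.e., exp(i t L(e,e)) = e^{it} P_2(e) + e^{it/2} P_1(e) + P_0(e), where P_2(e), P_1(e), P_0(e) are the Peirce projections associated with e. -/
open NormedSpace in
lemma exp_apply_eigenvector {E : Type*} [NormedAddCommGroup E] [NormedSpace ℂ E]
    [CompleteSpace E] (T : E →L[ℂ] E) (v : E) (c : ℂ) (h : T v = c • v) :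
    NormedSpace.exp T v = Complex.exp c • v := by
  have hpow : ∀ n : ℕ, (T ^ n) v = c ^ n • v := by
    intro n
    induction n with
    | zero => simp
    | succ n ih =>
      rw [pow_succ, ContinuousLinearMap.mul_apply, h, map_smul, ih, smul_smul, pow_succ,
        mul_comm]
  have hsum : Summable fun n : ℕ => ((n.factorial : ℂ))⁻¹ • T ^ n :=
    NormedSpace.expSeries_summable' (𝕂 := ℂ) T
  have happ := (ContinuousLinearMap.apply ℂ E v).map_tsum hsum
  rw [NormedSpace.exp_eq_tsum ℂ]
  calc (∑' n : ℕ, ((n.factorial : ℂ))⁻¹ • T ^ n) v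
      = ∑' n : ℕ, (ContinuousLinearMap.apply ℂ E v) (((n.factorial : ℂ))⁻¹ • T ^ n) := happ
    _ = ∑' n : ℕ, (((n.factorial : ℂ))⁻¹ * c ^ n) • v := by
        refine tsum_congr fun n => ?_
        simp [hpow n, smul_smul]
    _ = (∑' n : ℕ, ((n.factorial : ℂ))⁻¹ * c ^ n) • v := by
        refine Summable.tsum_smul_const ?_ v
        simpa [smul_eq_mul] using NormedSpace.expSeries_summable' (𝕂 := ℂ) c
    _ = Complex.exp c • v := by
        rw [Complex.exp_eq_exp_ℂ, NormedSpace.exp_eq_tsum ℂ]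
        simp [smul_eq_mul]

lemma exp_L_peirce_aux {A : Type*} [NonUnitalCStarAlgebra A] (p q : A)
    (hpp : p * p = p) (hqq : q * q = q)
    (L : A →L[ℂ] A) (hL : ∀ x : A, L x = (2 : ℂ)⁻¹ • (p * x + x * q)) (t : ℝ) (x : A) :
    (NormedSpace.exp ((Complex.I * t) • L) : A →L[ℂ] A) x =
      Complex.exp (Complex.I * t) • (p * x * q) +
        Complex.exp (Complex.I * t / 2) • (p * x + x * q - (2 : ℂ) • (p * x * q)) +
        (x - p * x - x * q + p * x * q) := by
  have hLx2 : ((Complex.I * t) • L) (p * x * q) = (Complex.I * t) • (p * x * q) := by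
    rw [ContinuousLinearMap.smul_apply, hL]
    have h1 : p * (p * x * q) = p * x * q := by
      rw [← mul_assoc, ← mul_assoc, hpp]
    have h2 : p * x * q * q = p * x * q := by rw [mul_assoc, hqq]
    rw [h1, h2, ← two_smul ℂ (p * x * q), smul_smul, smul_smul]
    congr 1
    ring
  have hLx1 : ((Complex.I * t) • L) (p * x + x * q - (2 : ℂ) • (p * x * q)) =
      (Complex.I * t / 2) • (p * x + x * q - (2 : ℂ) • (p * x * q)) := by
    rw [ContinuousLinearMap.smul_apply, hL]
    have hp' : ∀ y : A, p * (p * y) = p * y := fun y => by rw [← mul_assoc, hpp]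
    have h1 : p * (p * x + x * q - (2 : ℂ) • (p * x * q)) = p * x - p * x * q := by
      simp only [mul_sub, mul_add, mul_smul_comm, mul_assoc, hp', two_smul]
      abel
    have h2 : (p * x + x * q - (2 : ℂ) • (p * x * q)) * q = x * q - p * x * q := by
      simp only [sub_mul, add_mul, smul_mul_assoc, mul_assoc, hqq, two_smul]
      abel
    rw [h1, h2, smul_smul]
    have : p * x - p * x * q + (x * q - p * x * q) =
        p * x + x * q - (2 : ℂ) • (p * x * q) := by
      rw [two_smul]; abel
    rw [this, div_eq_mul_inv]
  have hLx0 : ((Complex.I * t) • L) (x - p * x - x * q + p * x * q) =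
      (0 : ℂ) • (x - p * x - x * q + p * x * q) := by
    rw [ContinuousLinearMap.smul_apply, hL]
    have hp' : ∀ y : A, p * (p * y) = p * y := fun y => by rw [← mul_assoc, hpp]
    have h1 : p * (x - p * x - x * q + p * x * q) = 0 := by
      simp only [mul_add, mul_sub, mul_assoc, hp']
      abel
    have h2 : (x - p * x - x * q + p * x * q) * q = 0 := by
      simp only [add_mul, sub_mul, mul_assoc, hqq]
      abel
    rw [h1, h2]
    simp
  have e2 := exp_apply_eigenvector ((Complex.I * t) • L) _ _ hLx2
  have e1 := exp_apply_eigenvector ((Complex.I * t) • L) _ _ hLx1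
  have e0 := exp_apply_eigenvector ((Complex.I * t) • L) _ _ hLx0
  have hdecomp : x = p * x * q + (p * x + x * q - (2 : ℂ) • (p * x * q)) +
      (x - p * x - x * q + p * x * q) := by
    rw [two_smul]; abel
  calc (NormedSpace.exp ((Complex.I * t) • L)) x
      = (NormedSpace.exp ((Complex.I * t) • L)) (p * x * q)
        + (NormedSpace.exp ((Complex.I * t) • L)) (p * x + x * q - (2 : ℂ) • (p * x * q))
        + (NormedSpace.exp ((Complex.I * t) • L)) (x - p * x - x * q + p * x * q) := by
        rw [← map_add, ← map_add, ← hdecomp]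
    _ = _ := by rw [e2, e1, e0, Complex.exp_zero, one_smul]

/-- For a partial isometry `e` in a C*-algebra `A` (`e e* e = e`), the operator
`exp (i t L(e,e))` acts as `e^{it} P₂(e) + e^{it/2} P₁(e) + P₀(e)`, where
`P₂(e) x = e e* x e* e`, `P₁(e) x = e e* x + x e* e − 2 e e* x e* e` and
`P₀(e) x = x − e e* x − x e* e + e e* x e* e` are the Peirce projections of `e`. -/
theorem exp_L_partial_isometry_peirce {A : Type*} [NonUnitalCStarAlgebra A] (e : A)
    (he : e * star e * e = e)
    (L : A →L[ℂ] A)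
    (hL : ∀ x : A, L x = (2 : ℂ)⁻¹ • (e * star e * x + x * (star e * e))) :
    ∀ (t : ℝ) (x : A),
      (NormedSpace.exp ((Complex.I * t) • L) : A →L[ℂ] A) x =
        Complex.exp (Complex.I * t) • (e * star e * x * (star e * e)) +
          Complex.exp (Complex.I * t / 2) •
            (e * star e * x + x * (star e * e) - (2 : ℂ) • (e * star e * x * (star e * e))) +
          (x - e * star e * x - x * (star e * e) + e * star e * x * (star e * e)) := by
  intro t x
  have hpp : (e * star e) * (e * star e) = e * star e := by
    calc (e * star e) * (e * star e) = (e * star e * e) * star e := by rw [← mul_assoc]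
      _ = e * star e := by rw [he]
  have hqq : (star e * e) * (star e * e) = star e * e := by
    calc (star e * e) * (star e * e) = star e * (e * star e * e) := by
          simp only [mul_assoc]
      _ = star e * e := by rw [he]
  exact exp_L_peirce_aux (e * star e) (star e * e) hpp hqq L hL t x
end

section
/- Let A be a unital C*-algebra, let h be a self-adjoint element of the center of A, and let d be a bounded *-derivation on A (d(ab) = d(a)b + ad(b), d(a*) = d(a)* for all a,b ∈ A). For t ∈ ℝ set T_t = exp(t (L_h + d)), where L_h(x) = h x. Then {T_t : t ∈ ℝ} is a uniformly continuous one-parameter group of bounded linear bijections on A, each T_t is symmetric (T_t(a*) = T_t(a)* for all a ∈ A) and orthogonality preserving, and T_t(1) = exp(t h) for every t ∈ ℝ. -/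
open NormedSpace ContinuousLinearMap Nat Filter

theorem opg_exp_add_of_commute {𝔸 : Type*} [NormedRing 𝔸] [NormedAlgebra ℂ 𝔸] [CompleteSpace 𝔸]
    {x y : 𝔸} (hxy : Commute x y) : exp (x + y) = exp x * exp y :=
  exp_add_of_commute_of_mem_ball (𝕂 := ℂ) hxy
    ((expSeries_radius_eq_top ℂ 𝔸).symm ▸ edist_lt_top _ _)
    ((expSeries_radius_eq_top ℂ 𝔸).symm ▸ edist_lt_top _ _)

theorem opg_exp_continuous {𝔸 : Type*} [NormedRing 𝔸] [NormedAlgebra ℂ 𝔸] [CompleteSpace 𝔸] :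
    Continuous (exp : 𝔸 → 𝔸) := by
  rw [← continuousOn_univ, ← Metric.eball_top_eq_univ (0 : 𝔸), ←
    expSeries_radius_eq_top ℂ 𝔸]
  exact continuousOn_exp

namespace OPGAux

variable {A : Type*} [CStarAlgebra A]

theorem exp_clm_apply (M : A →L[ℂ] A) (z : A) :
    exp M z = ∑' n : ℕ, (n ! : ℂ)⁻¹ • ((M ^ n) z) := by
  have hs := expSeries_summable' (𝕂 := ℂ) M
  have := (ContinuousLinearMap.apply ℂ A z).map_tsum hs
  rw [exp_eq_tsum ℂ]
  simpa using this

theorem key_orth (G D : A →L[ℂ] A)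
    (hGD : ∀ u v : A, D (u * v) = G u * v + u * G v)
    (x y : A) (hxy : x * y = 0) (s : ℂ) :
    exp (s • G) x * exp (s • G) y = 0 := by
  set f : ℂ → A := fun c => exp (-(c • D)) (exp (c • G) x * exp (c • G) y) with hf
  have hexpD : ∀ c : ℂ, HasDerivAt (fun c : ℂ => exp (-(c • D)))
      (-(D * exp (-(c • D)))) c := by
    intro c
    have h1 := hasDerivAt_exp_smul_const' (𝕂 := ℂ) D (-c)
    have h2 : HasDerivAt (fun c : ℂ => -c) (-1 : ℂ) c := (hasDerivAt_id c).neg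
    have := HasDerivAt.scomp c h1 h2
    simpa [Function.comp_def, neg_one_smul] using this
  have hderiv : ∀ c : ℂ, HasDerivAt f 0 c := by
    intro c
    have hx' : HasDerivAt (fun c : ℂ => exp (c • G) x) (G (exp (c • G) x)) c := by
      have := (hasDerivAt_exp_smul_const' (𝕂 := ℂ) G c).clm_apply (hasDerivAt_const c x)
      simpa using this
    have hy' : HasDerivAt (fun c : ℂ => exp (c • G) y) (G (exp (c • G) y)) c := by
      have := (hasDerivAt_exp_smul_const' (𝕂 := ℂ) G c).clm_apply (hasDerivAt_const c y)
      simpa using this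
    have hp : HasDerivAt (fun c : ℂ => exp (c • G) x * exp (c • G) y)
        (D (exp (c • G) x * exp (c • G) y)) c := by
      have := hx'.mul hy'
      rw [hGD]
      exact this
    have hcomm0 : Commute D (-(c • D)) := by
      ext a
      simp [ContinuousLinearMap.mul_apply, map_smul]
    have hcomm : Commute D (exp (-(c • D))) := hcomm0.exp_right
    have := (hexpD c).clm_apply hp
    convert this using 1
    case e'_4 => rfl
    have h1 : exp (-(c • D)) (D (exp (c • G) x * exp (c • G) y))
        = D (exp (-(c • D)) (exp (c • G) x * exp (c • G) y)) := by
      rw [← ContinuousLinearMap.mul_apply, ← hcomm.eq, ContinuousLinearMap.mul_apply]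
    rw [h1]
    simp [ContinuousLinearMap.mul_apply]
  have hconst := is_const_of_deriv_eq_zero (fun c => (hderiv c).differentiableAt)
      (fun c => (hderiv c).deriv)
  have hf0 : f 0 = 0 := by
    show exp (-((0:ℂ) • D)) (exp ((0:ℂ) • G) x * exp ((0:ℂ) • G) y) = 0
    rw [show ((0:ℂ) • D) = 0 from zero_smul ℂ D,
      show ((0:ℂ) • G) = 0 from zero_smul ℂ G, neg_zero]
    simp only [exp_zero, ContinuousLinearMap.one_apply, hxy, map_zero]
  have h0 : f s = 0 := (hconst s 0).trans hf0
  have hcm : Commute (s • D) (-(s • D)) := by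
    ext a
    simp [ContinuousLinearMap.mul_apply, map_smul, smul_smul, mul_comm]
  have hzero : s • D + -(s • D) = 0 := add_neg_cancel _
  have hinv : exp (s • D) * exp (-(s • D)) = 1 := by
    rw [← opg_exp_add_of_commute hcm, hzero, exp_zero]
  calc exp (s • G) x * exp (s • G) y
      = (exp (s • D) * exp (-(s • D))) (exp (s • G) x * exp (s • G) y) := by
        rw [hinv]; simp
    _ = exp (s • D) (f s) := by rw [ContinuousLinearMap.mul_apply]
    _ = 0 := by rw [h0, map_zero]

theorem d_one_eq_zero (d : A →L[ℂ] A) (hd : ∀ a b : A, d (a * b) = d a * b + a * d b) :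
    d (1 : A) = 0 := by
  have h2 : d 1 = d 1 + d 1 := by simpa using hd 1 1
  exact (left_eq_add.mp h2)

theorem derivation_central_eq_zero (h : A) (hsa : IsSelfAdjoint h)
    (hc : ∀ a : A, h * a = a * h) (d : A →L[ℂ] A)
    (hd : ∀ a b : A, d (a * b) = d a * b + a * d b) : d h = 0 := by
  rcases subsingleton_or_nontrivial A with hA | hA
  · exact Subsingleton.elim _ _
  -- d h is central
  have hcen : ∀ a : A, d h * a = a * d h := by
    intro a
    have e1 := hd h a
    have e2 := hd a h
    rw [hc a] at e1
    rw [e2] at e1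
    rw [← hc (d a)] at e1
    have := add_left_cancel (a := h * d a) (b := a * d h) (c := d h * a)
    rw [add_comm (d h * a) (h * d a)] at e1
    exact (this e1).symm
  -- power rule
  have hpow : ∀ n : ℕ, d (h ^ (n + 1)) = ((n : ℂ) + 1) • (h ^ n * d h) := by
    intro n
    induction n with
    | zero => simp
    | succ n ih =>
      have : h ^ (n + 2) = h * h ^ (n + 1) := (pow_succ' h (n + 1))
      rw [this, hd h (h ^ (n + 1)), ih]
      have h1 : d h * h ^ (n + 1) = h ^ (n + 1) * d h := hcen _
      have h2 : h * (((n : ℂ) + 1) • (h ^ n * d h)) = ((n : ℂ) + 1) • (h ^ (n + 1) * d h) := by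
        rw [mul_smul_comm, ← mul_assoc, ← pow_succ' h n]
      rw [h1, h2]
      push_cast
      module
  -- derivative of the exponential
  have hdexp : ∀ c : ℂ, d (exp (c • h)) = c • (exp (c • h) * d h) := by
    intro c
    set g : ℕ → A := fun n => (n ! : ℂ)⁻¹ • (c • h) ^ n with hg
    have hgsum : HasSum g (exp (c • h)) := exp_series_hasSum_exp' (c • h)
    set R : A →L[ℂ] A := (ContinuousLinearMap.mul ℂ A).flip (d h) with hR
    have hRapp : ∀ z : A, R z = z * d h := fun z => rfl
    have hsum_eq : (c • R) (exp (c • h)) = c • (exp (c • h) * d h) := by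
      rw [smul_apply, hRapp]
    clear_value R
    have hfun : ∀ n : ℕ, d (g (n + 1)) = (c • R) (g n) := by
      intro n
      have e1 : g (n + 1) = (((n + 1)! : ℂ))⁻¹ • (c ^ (n + 1) • h ^ (n + 1)) := by
        rw [hg]; simp only []; rw [smul_pow]
      have e2 : g n = ((n ! : ℂ))⁻¹ • (c ^ n • h ^ n) := by
        rw [hg]; simp only []; rw [smul_pow]
      rw [e1, e2, map_smul, map_smul, hpow n, smul_apply, hRapp]
      simp only [smul_mul_assoc, smul_smul]
      congr 1
      have hfac : (((n + 1)! : ℂ)) = ((n : ℂ) + 1) * (n ! : ℂ) := by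
        push_cast [Nat.factorial_succ]
        ring
      have hne : ((n : ℂ) + 1) ≠ 0 := by
        have h' : (((n + 1 : ℕ)) : ℂ) ≠ 0 := Nat.cast_ne_zero.mpr n.succ_ne_zero
        push_cast at h'
        exact h'
      have hfne : ((n ! : ℂ)) ≠ 0 := Nat.cast_ne_zero.mpr n.factorial_ne_zero
      field_simp [hfac]
      rw [hfac]; ring
    have H1 : HasSum (fun n => d (g (n + 1))) (c • (exp (c • h) * d h)) := by
      have heq : (fun n : ℕ => d (g (n + 1))) = fun n => (c • R) (g n) := funext hfun
      rw [heq, ← hsum_eq]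
      exact hgsum.mapL (c • R)
    have H2 : HasSum (fun n => d (g n)) (c • (exp (c • h) * d h)) := by
      have h0 : d (g 0) = 0 := by
        rw [hg]
        simp [d_one_eq_zero d hd]
      refine (hasSum_nat_add_iff' 1).mp ?_
      simpa [h0] using H1
    have H3 : HasSum (fun n => d (g n)) (d (exp (c • h))) := hgsum.mapL d
    exact H3.unique H2
  -- unitaries
  have huni : ∀ t : ℝ,
      exp (-(((t : ℂ) * Complex.I) • h)) * exp (((t : ℂ) * Complex.I) • h) = 1 := by
    intro t
    have hcm : Commute (-(((t : ℂ) * Complex.I) • h)) ((((t : ℂ) * Complex.I)) • h) := by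
      simp [Commute, SemiconjBy, mul_smul_comm, smul_mul_assoc, neg_mul, mul_neg]
    rw [← opg_exp_add_of_commute hcm, neg_add_cancel, exp_zero]
  have hstaru : ∀ t : ℝ, star (exp (((t : ℂ) * Complex.I) • h))
      = exp (-(((t : ℂ) * Complex.I) • h)) := by
    intro t
    rw [star_exp]
    congr 1
    rw [star_smul, hsa.star_eq]
    congr 1
    simp [Complex.ext_iff]
  have hnorm : ∀ t : ℝ, ‖exp (((t : ℂ) * Complex.I) • h)‖ = 1 := by
    intro t
    set u := exp (((t : ℂ) * Complex.I) • h) with hu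
    have h1 : star u * u = 1 := by rw [hstaru t]; exact huni t
    have h2 : ‖u‖ * ‖u‖ = 1 := by
      rw [← CStarRing.norm_star_mul_self, h1, norm_one]
    nlinarith [norm_nonneg u]
  -- the estimate
  have hb : ∀ t : ℝ, |t| * ‖d h‖ ≤ ‖d‖ := by
    intro t
    set c : ℂ := (t : ℂ) * Complex.I with hcdef
    set u := exp (c • h) with hu
    have h1 : ‖d u‖ ≤ ‖d‖ := by
      calc ‖d u‖ ≤ ‖d‖ * ‖u‖ := d.le_opNorm u
        _ = ‖d‖ := by rw [hnorm t, mul_one]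
    have h3 : ‖d h‖ ≤ ‖u * d h‖ := by
      have e : d h = star u * (u * d h) := by
        rw [← mul_assoc, hstaru t, huni t, one_mul]
      calc ‖d h‖ = ‖star u * (u * d h)‖ := by rw [← e]
        _ ≤ ‖star u‖ * ‖u * d h‖ := norm_mul_le _ _
        _ = ‖u * d h‖ := by rw [norm_star, hnorm t, one_mul]
    have h4 : ‖c‖ = |t| := by
      simp [hcdef, Complex.norm_real]
    calc |t| * ‖d h‖ ≤ |t| * ‖u * d h‖ := mul_le_mul_of_nonneg_left h3 (abs_nonneg t)
      _ = ‖d u‖ := by rw [hdexp c, norm_smul, h4]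
      _ ≤ ‖d‖ := h1
  by_contra hne
  have hpos : 0 < ‖d h‖ := norm_pos_iff.mpr hne
  have := hb ((‖d‖ + 1) / ‖d h‖)
  rw [abs_of_pos (by positivity), div_mul_cancel₀ _ hpos.ne'] at this
  linarith

end OPGAux

/-- Let `A` be a unital C*-algebra, `h` a self-adjoint central element of `A` and `d` a
bounded *-derivation on `A`.  Then `T_t := exp (t (L_h + d))` is a uniformly continuous
one-parameter group of bounded linear bijections on `A`, each `T_t` is symmetric and
orthogonality preserving, and `T_t 1 = exp (t h)` for every real `t`. -/
theorem one_parameter_group_exp_mul_add_derivation {A : Type*} [CStarAlgebra A]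
    (h : A) (hsa : IsSelfAdjoint h) (hc : ∀ a : A, h * a = a * h)
    (d : A →L[ℂ] A)
    (hd : ∀ a b : A, d (a * b) = d a * b + a * d b)
    (hdstar : ∀ a : A, d (star a) = star (d a))
    (T : ℝ → A →L[ℂ] A)
    (hT : ∀ t : ℝ, T t = NormedSpace.exp ((t : ℂ) • (ContinuousLinearMap.mul ℂ A h + d))) :
    T 0 = ContinuousLinearMap.id ℂ A ∧
      (∀ t s : ℝ, T (t + s) = (T t).comp (T s)) ∧
      Filter.Tendsto (fun t : ℝ => ‖T t - ContinuousLinearMap.id ℂ A‖) (nhds 0) (nhds 0) ∧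
      (∀ t : ℝ, Function.Bijective (T t)) ∧
      (∀ (t : ℝ) (a : A), T t (star a) = star (T t a)) ∧
      (∀ (t : ℝ) (a b : A), IsOrthogonal a b → IsOrthogonal (T t a) (T t b)) ∧
      (∀ t : ℝ, T t 1 = NormedSpace.exp ((t : ℂ) • h)) := by
  open OPGAux in
  set M : A →L[ℂ] A := ContinuousLinearMap.mul ℂ A h + d with hM
  -- Part 1
  have hP1 : T 0 = ContinuousLinearMap.id ℂ A := by
    rw [hT 0, Complex.ofReal_zero, show ((0:ℂ)) • M = 0 from zero_smul ℂ M, exp_zero]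
    rfl
  -- Part 2
  have hP2 : ∀ t s : ℝ, T (t + s) = (T t).comp (T s) := by
    intro t s
    have hcm : Commute ((t : ℂ) • M) ((s : ℂ) • M) := by
      ext a
      simp [ContinuousLinearMap.mul_apply, map_smul, smul_smul, mul_comm]
    rw [hT, hT, hT, Complex.ofReal_add,
      show ((t : ℂ) + (s : ℂ)) • M = (t : ℂ) • M + (s : ℂ) • M from add_smul (t:ℂ) (s:ℂ) M,
      opg_exp_add_of_commute hcm]
    rfl
  -- Part 3
  have hP3 : Filter.Tendsto (fun t : ℝ => ‖T t - ContinuousLinearMap.id ℂ A‖)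
      (nhds 0) (nhds 0) := by
    have hcont : Continuous fun t : ℝ => exp ((t : ℂ) • M) :=
      opg_exp_continuous.comp (Complex.continuous_ofReal.smul continuous_const)
    have h1 : Filter.Tendsto (fun t : ℝ => exp ((t : ℂ) • M)) (nhds 0) (nhds 1) := by
      have := hcont.tendsto 0
      simpa [Complex.ofReal_zero, show ((0:ℂ)) • M = 0 from zero_smul ℂ M, exp_zero] using this
    have h0 : Filter.Tendsto (fun t : ℝ => T t - ContinuousLinearMap.id ℂ A)
        (nhds 0) (nhds 0) := by
      have h2 := h1.sub (tendsto_const_nhds (x := ContinuousLinearMap.id ℂ A))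
      rw [show (1 : A →L[ℂ] A) - ContinuousLinearMap.id ℂ A = 0 by
        rw [ContinuousLinearMap.one_def, sub_self]] at h2
      simp only [hT]
      exact h2
    simpa using h0.norm
  -- Part 4
  have hP4 : ∀ t : ℝ, Function.Bijective (T t) := by
    intro t
    have e1 : ∀ z : A, T (-t) (T t z) = z := by
      intro z
      have := hP2 (-t) t
      rw [neg_add_cancel, hP1] at this
      calc T (-t) (T t z) = ((T (-t)).comp (T t)) z := rfl
        _ = z := by rw [← this]; rfl
    have e2 : ∀ z : A, T t (T (-t) z) = z := by
      intro z
      have := hP2 t (-t)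
      rw [add_neg_cancel, hP1] at this
      calc T t (T (-t) z) = ((T t).comp (T (-t))) z := rfl
        _ = z := by rw [← this]; rfl
    exact ⟨Function.LeftInverse.injective e1, Function.RightInverse.surjective e2⟩
  -- Part 5
  have hP5 : ∀ (t : ℝ) (a : A), T t (star a) = star (T t a) := by
    intro t a
    rw [hT]
    set N : A →L[ℂ] A := (t : ℂ) • M with hN
    have hstep : ∀ z : A, N (star z) = star (N z) := by
      intro z
      have hMz : M (star z) = star (M z) := by
        show h * star z + d (star z) = star (h * z + d z)
        have hsz : star (h * z) = h * star z := by
          rw [star_mul, hsa.star_eq, ← hc (star z)]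
        rw [star_add, hdstar, hsz]
      show (t : ℂ) • M (star z) = star ((t : ℂ) • M z)
      rw [star_smul, hMz]
      congr 1
      exact (Complex.conj_ofReal t).symm
    have hstepN : ∀ (n : ℕ) (z : A), (N ^ n) (star z) = star ((N ^ n) z) := by
      intro n
      induction n with
      | zero => intro z; simp
      | succ n ih =>
        intro z
        rw [pow_succ, ContinuousLinearMap.mul_apply, ContinuousLinearMap.mul_apply,
          hstep z, ih (N z)]
    rw [exp_clm_apply, exp_clm_apply, tsum_star]
    refine tsum_congr fun n => ?_
    rw [hstepN n a, star_smul, star_inv₀, star_natCast]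
  -- Part 6
  have hP6 : ∀ (t : ℝ) (a b : A), IsOrthogonal a b → IsOrthogonal (T t a) (T t b) := by
    intro t a b hab
    obtain ⟨hab1, hab2⟩ := hab
    set D : A →L[ℂ] A := (2:ℂ) • ContinuousLinearMap.mul ℂ A h + d with hD
    have hGD : ∀ u v : A, D (u * v) = M u * v + u * M v := by
      intro u v
      show (2:ℂ) • (h * (u * v)) + d (u * v) = (h * u + d u) * v + u * (h * v + d v)
      rw [hd]
      have huv : u * (h * v) = h * (u * v) := by
        rw [hc v, ← mul_assoc, ← hc (u * v)]
      rw [two_smul, add_mul, mul_add, mul_assoc, huv]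
      abel
    constructor
    · rw [← hP5 t b, hT]
      exact key_orth M D hGD a (star b) hab1 (t : ℂ)
    · rw [← hP5 t b, hT]
      exact key_orth M D hGD (star b) a hab2 (t : ℂ)
  -- Part 7
  have hP7 : ∀ t : ℝ, T t 1 = exp ((t : ℂ) • h) := by
    intro t
    have hdh : d h = 0 := derivation_central_eq_zero h hsa hc d hd
    have hd1 : d (1 : A) = 0 := d_one_eq_zero d hd
    have hdpow : ∀ n : ℕ, d (h ^ n) = 0 := by
      intro n
      induction n with
      | zero => simpa using hd1
      | succ n ih => rw [pow_succ, hd, ih, hdh]; simp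
    rw [hT, exp_clm_apply]
    set N : A →L[ℂ] A := (t : ℂ) • M with hN
    have hN1 : ∀ n : ℕ, (N ^ n) 1 = ((t : ℂ) • h) ^ n := by
      intro n
      induction n with
      | zero => simp
      | succ n ih =>
        rw [pow_succ' N n, ContinuousLinearMap.mul_apply, ih]
        have hMh : M (((t : ℂ) • h) ^ n) = (t : ℂ) ^ n • h ^ (n + 1) := by
          rw [smul_pow, map_smul]
          have : M (h ^ n) = h ^ (n + 1) := by
            show h * h ^ n + d (h ^ n) = h ^ (n + 1)
            rw [hdpow n, add_zero, ← pow_succ' h n]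
          rw [this]
        show (t : ℂ) • M (((t : ℂ) • h) ^ n) = ((t : ℂ) • h) ^ (n + 1)
        rw [hMh, smul_smul, smul_pow, pow_succ' h n]
        rw [show ((t:ℂ) * (t:ℂ) ^ n) = (t:ℂ) ^ (n+1) from (pow_succ' (t:ℂ) n).symm]
    rw [exp_eq_tsum ℂ]
    exact tsum_congr fun n => by rw [hN1 n]
  exact ⟨hP1, hP2, hP3, hP4, hP5, hP6, hP7⟩
end
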